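/- Let a > 0, b < 0, and M > 0. There exists a constant C > 0 such that for all t > 0: ∫₀^t ∫_{−∞}^0 (t−s)^{−1} e^{−(y+a(t−s))²/(M(t−s))} (1+s)^{−1/2} s^{−1/2} e^{−(y−bs)²/(Ms)} dy ds ≤ C (1+t)^{−1}. -/

import Mathlib

open MeasureTheory Set Real

private lemma eqi_qform {p q u v : ℝ} (hp : 0 < p) (hq : 0 < q) :
    (u - v)^2 / (p + q) ≤ u^2 / p + v^2 / q := by
  rw [div_add_div _ _ hp.ne' hq.ne', div_le_div_iff₀ (by positivity) (by positivity)]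
  nlinarith [sq_nonneg (u*q + v*p), mul_pos hp hq]

private lemma eqi_gauss_integrable (c D : ℝ) (hD : 0 < D) :
    Integrable (fun y : ℝ => Real.exp (-(y + c)^2 / D)) := by
  have h : (fun y : ℝ => Real.exp (-(y + c)^2 / D)) =
      fun y => Real.exp (-D⁻¹ * (y + c)^2) := by
    funext y; congr 1; field_simp
  rw [h]
  exact (integrable_exp_neg_mul_sq (by positivity)).comp_add_right c

private lemma eqi_gauss_integral (c D : ℝ) (hD : 0 < D) :
    (∫ y : ℝ, Real.exp (-(y + c)^2 / D)) = Real.sqrt (Real.pi * D) := by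
  have h : (fun y : ℝ => Real.exp (-(y + c)^2 / D)) =
      fun y => Real.exp (-D⁻¹ * (y + c)^2) := by
    funext y; congr 1; field_simp
  rw [h, MeasureTheory.integral_add_right_eq_self (fun y => Real.exp (-D⁻¹ * y^2)) c,
    integral_gaussian]
  congr 1
  field_simp

private lemma eqi_rpow_neg_half {x : ℝ} (hx : 0 ≤ x) :
    x ^ (-(1/2:ℝ)) = (Real.sqrt x)⁻¹ := by
  rw [Real.rpow_neg hx, Real.sqrt_eq_rpow]

private lemma eqi_integrableOn_sqrt_inv {A : ℝ} (hA : 0 < A) :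
    IntegrableOn (fun s : ℝ => (Real.sqrt s)⁻¹) (Ioc 0 A) := by
  have h := _root_.intervalIntegral.intervalIntegrable_rpow' (a := 0) (b := A)
    (r := -(1/2:ℝ)) (by norm_num)
  rw [intervalIntegrable_iff_integrableOn_Ioc_of_le hA.le] at h
  exact h.congr_fun (fun s hs => eqi_rpow_neg_half hs.1.le) measurableSet_Ioc

private lemma eqi_integral_sqrt_inv {A : ℝ} (hA : 0 ≤ A) :
    ∫ s in Ioc (0:ℝ) A, (Real.sqrt s)⁻¹ = 2 * Real.sqrt A := by
  have h1 : ∫ s in Ioc (0:ℝ) A, (Real.sqrt s)⁻¹ = ∫ s in Ioc (0:ℝ) A, s ^ (-(1/2:ℝ)) :=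
    setIntegral_congr_fun measurableSet_Ioc fun s hs => (eqi_rpow_neg_half hs.1.le).symm
  rw [h1, ← _root_.intervalIntegral.integral_of_le hA,
    _root_.integral_rpow (Or.inl (by norm_num)), Real.sqrt_eq_rpow,
    Real.zero_rpow (by norm_num : -(1/2:ℝ) + 1 ≠ 0)]
  norm_num
  ring

private lemma eqi_integrableOn_sqrt_inv_refl {c t : ℝ} (hct : c < t) :
    IntegrableOn (fun s : ℝ => (Real.sqrt (t - s))⁻¹) (Ioc c t) := by
  have h0 : IntervalIntegrable (fun x : ℝ => (Real.sqrt x)⁻¹) volume 0 (t - c) := by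
    rw [intervalIntegrable_iff_integrableOn_Ioc_of_le (by linarith)]
    exact eqi_integrableOn_sqrt_inv (by linarith)
  have h1 := h0.comp_sub_left t
  rw [show t - 0 = t by ring, show t - (t - c) = c by ring] at h1
  rw [← intervalIntegrable_iff_integrableOn_Ioc_of_le hct.le]
  exact h1.symm

private lemma eqi_integral_sqrt_inv_refl {c t : ℝ} (hct : c ≤ t) :
    ∫ s in Ioc c t, (Real.sqrt (t - s))⁻¹ = 2 * Real.sqrt (t - c) := by
  rw [← _root_.intervalIntegral.integral_of_le hct,
    _root_.intervalIntegral.integral_comp_sub_left (fun x => (Real.sqrt x)⁻¹) t, sub_self,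
    _root_.intervalIntegral.integral_of_le (by linarith), eqi_integral_sqrt_inv (by linarith)]

private lemma eqi_gauss_affine_integrable {K D : ℝ} (c : ℝ) (hK : 0 < K) (hD : 0 < D) :
    Integrable (fun s : ℝ => Real.exp (-(K*s - c)^2 / D)) := by
  have hfun : (fun s : ℝ => Real.exp (-(K*s - c)^2 / D)) =
      fun s => Real.exp (-(s + (-(c/K)))^2 / (D / K^2)) := by
    funext s; congr 1; field_simp; ring
  rw [hfun]
  exact eqi_gauss_integrable _ _ (by positivity)

private lemma eqi_gauss_affine_integral {K D : ℝ} (c : ℝ) (hK : 0 < K) (hD : 0 < D) :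
    (∫ s : ℝ, Real.exp (-(K*s - c)^2 / D)) = Real.sqrt (Real.pi * D) / K := by
  have hfun : (fun s : ℝ => Real.exp (-(K*s - c)^2 / D)) =
      fun s => Real.exp (-(s + (-(c/K)))^2 / (D / K^2)) := by
    funext s; congr 1; field_simp; ring
  rw [hfun, eqi_gauss_integral _ _ (by positivity),
    show Real.pi * (D / K^2) = (Real.pi * D) / K^2 by ring,
    Real.sqrt_div (by positivity), Real.sqrt_sq hK.le]

private lemma eqi_exp_pair {a b M t s : ℝ} (hM : 0 < M) (hs : 0 < s) (hst : s < t) (y : ℝ) :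
    Real.exp (-(y + a*(t-s))^2 / (M*(t-s))) * Real.exp (-(y - b*s)^2 / (M*s)) ≤
      Real.exp (-(a*t - (a-b)*s)^2 / (2*M*t)) *
        Real.exp (-(y + a*(t-s))^2 / (2*M*(t-s))) := by
  rw [← Real.exp_add, ← Real.exp_add, Real.exp_le_exp]
  have hτ : 0 < t - s := by linarith
  have h1 : (a*t - (a-b)*s)^2 / (2*M*t) ≤
      (y + a*(t-s))^2 / (2*M*(t-s)) + (y - b*s)^2 / (M*s) := by
    have h2 := eqi_qform (p := 2*M*(t-s)) (q := M*s)
      (u := y + a*(t-s)) (v := y - b*s) (by positivity) (by positivity)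
    have h3 : (y + a*(t-s)) - (y - b*s) = a*t - (a-b)*s := by ring
    rw [h3] at h2
    refine le_trans ?_ h2
    apply div_le_div_of_nonneg_left (sq_nonneg _) (by positivity) (by nlinarith)
  have h4 : (y + a*(t-s))^2 / (M*(t-s)) =
      (y + a*(t-s))^2 / (2*M*(t-s)) + (y + a*(t-s))^2 / (2*M*(t-s)) := by
    field_simp
    ring
  have e1 : -(y + a*(t-s))^2 / (M*(t-s)) = -((y + a*(t-s))^2 / (M*(t-s))) := by ring
  have e2 : -(y - b*s)^2 / (M*s) = -((y - b*s)^2 / (M*s)) := by ring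
  have e3 : -(a*t - (a-b)*s)^2 / (2*M*t) = -((a*t - (a-b)*s)^2 / (2*M*t)) := by ring
  have e4 : -(y + a*(t-s))^2 / (2*M*(t-s)) = -((y + a*(t-s))^2 / (2*M*(t-s))) := by ring
  rw [e1, e2, e3, e4, h4]
  linarith

private lemma eqi_inner_bound {a b M t s : ℝ} (ha : 0 < a) (hb : b < 0) (hM : 0 < M)
    (hs : 0 < s) (hst : s < t) :
    (∫ y in Iic (0:ℝ),
        (t - s)⁻¹ * Real.exp (-(y + a*(t-s))^2 / (M*(t-s))) *
          ((1 + s) ^ (-(1/2:ℝ)) * s ^ (-(1/2:ℝ))) *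
          Real.exp (-(y - b*s)^2 / (M*s))) ≤
      Real.sqrt (2*Real.pi*M) *
        ((Real.sqrt (t-s))⁻¹ * ((Real.sqrt (1+s))⁻¹ * (Real.sqrt s)⁻¹) *
          Real.exp (-(a*t - (a-b)*s)^2 / (2*M*t))) := by
  have hτ : 0 < t - s := by linarith
  set P : ℝ := (Real.sqrt (1+s))⁻¹ * (Real.sqrt s)⁻¹ with hP
  have hPnn : 0 ≤ P := by positivity
  have hPr : (1 + s) ^ (-(1/2:ℝ)) * s ^ (-(1/2:ℝ)) = P := by
    rw [eqi_rpow_neg_half (by linarith), eqi_rpow_neg_half hs.le]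
  set G : ℝ := Real.exp (-(a*t - (a-b)*s)^2 / (2*M*t)) with hG
  have hGnn : 0 ≤ G := Real.exp_nonneg _
  set c₀ : ℝ := (t - s)⁻¹ * P * G with hc₀
  have hc₀nn : 0 ≤ c₀ := by positivity
  have key : ∀ y : ℝ,
      (t - s)⁻¹ * Real.exp (-(y + a*(t-s))^2 / (M*(t-s))) *
          ((1 + s) ^ (-(1/2:ℝ)) * s ^ (-(1/2:ℝ))) *
          Real.exp (-(y - b*s)^2 / (M*s)) ≤
        c₀ * Real.exp (-(y + a*(t-s))^2 / (2*M*(t-s))) := by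
    intro y
    rw [hPr]
    have h := eqi_exp_pair (a := a) (b := b) hM hs hst y
    calc (t - s)⁻¹ * Real.exp (-(y + a*(t-s))^2 / (M*(t-s))) * P *
          Real.exp (-(y - b*s)^2 / (M*s))
        = ((t - s)⁻¹ * P) *
          (Real.exp (-(y + a*(t-s))^2 / (M*(t-s))) * Real.exp (-(y - b*s)^2 / (M*s))) := by
          ring
      _ ≤ ((t - s)⁻¹ * P) * (G * Real.exp (-(y + a*(t-s))^2 / (2*M*(t-s)))) := by
          apply mul_le_mul_of_nonneg_left h (by positivity)
      _ = c₀ * Real.exp (-(y + a*(t-s))^2 / (2*M*(t-s))) := by rw [hc₀]; ring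
  have hint : Integrable (fun y : ℝ => c₀ * Real.exp (-(y + a*(t-s))^2 / (2*M*(t-s)))) :=
    (eqi_gauss_integrable (a*(t-s)) (2*M*(t-s)) (by positivity)).const_mul c₀
  have step1 : (∫ y in Iic (0:ℝ),
        (t - s)⁻¹ * Real.exp (-(y + a*(t-s))^2 / (M*(t-s))) *
          ((1 + s) ^ (-(1/2:ℝ)) * s ^ (-(1/2:ℝ))) *
          Real.exp (-(y - b*s)^2 / (M*s))) ≤
      ∫ y in Iic (0:ℝ), c₀ * Real.exp (-(y + a*(t-s))^2 / (2*M*(t-s))) := by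
    apply integral_mono_of_nonneg
    · apply ae_of_all
      intro y
      have h1 : (0:ℝ) ≤ (1 + s) ^ (-(1/2:ℝ)) * s ^ (-(1/2:ℝ)) := by
        rw [hPr]; exact hPnn
      positivity
    · exact hint.restrict
    · exact ae_of_all _ key
  have step2 : (∫ y in Iic (0:ℝ), c₀ * Real.exp (-(y + a*(t-s))^2 / (2*M*(t-s)))) ≤
      ∫ y : ℝ, c₀ * Real.exp (-(y + a*(t-s))^2 / (2*M*(t-s))) := by
    apply setIntegral_le_integral hint
    apply ae_of_all
    intro y
    positivity
  have step3 : (∫ y : ℝ, c₀ * Real.exp (-(y + a*(t-s))^2 / (2*M*(t-s)))) =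
      c₀ * Real.sqrt (Real.pi * (2*M*(t-s))) := by
    rw [integral_const_mul, eqi_gauss_integral _ _ (by positivity)]
  have step4 : c₀ * Real.sqrt (Real.pi * (2*M*(t-s))) =
      Real.sqrt (2*Real.pi*M) * ((Real.sqrt (t-s))⁻¹ * P * G) := by
    have h1 : Real.sqrt (Real.pi * (2*M*(t-s))) =
        Real.sqrt (2*Real.pi*M) * Real.sqrt (t-s) := by
      rw [← Real.sqrt_mul (by positivity)]
      congr 1
      ring
    have h2 : (Real.sqrt (t-s))⁻¹ = (t - s)⁻¹ * Real.sqrt (t-s) := by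
      have hne : Real.sqrt (t-s) ≠ 0 := ne_of_gt (Real.sqrt_pos.2 hτ)
      field_simp
      rw [Real.sq_sqrt hτ.le]
    rw [h1, h2, hc₀]
    ring
  calc _ ≤ ∫ y in Iic (0:ℝ), c₀ * Real.exp (-(y + a*(t-s))^2 / (2*M*(t-s))) := step1
    _ ≤ ∫ y : ℝ, c₀ * Real.exp (-(y + a*(t-s))^2 / (2*M*(t-s))) := step2
    _ = c₀ * Real.sqrt (Real.pi * (2*M*(t-s))) := step3
    _ = Real.sqrt (2*Real.pi*M) * ((Real.sqrt (t-s))⁻¹ * P * G) := step4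

private lemma eqi_inv_sqrt_le {x y : ℝ} (hx : 0 < x) (hxy : x ≤ y) :
    (Real.sqrt y)⁻¹ ≤ (Real.sqrt x)⁻¹ :=
  inv_anti₀ (Real.sqrt_pos.2 hx) (Real.sqrt_le_sqrt hxy)

private lemma eqi_inv_sqrt_le_one {s : ℝ} (hs : 0 ≤ s) : (Real.sqrt (1+s))⁻¹ ≤ 1 := by
  apply inv_le_one_of_one_le₀
  rw [show (1:ℝ) = Real.sqrt 1 by simp]
  exact Real.sqrt_le_sqrt (by simp; linarith)

private lemma eqi_exp_term_le_one {X D : ℝ} (hD : 0 < D) : Real.exp (-X^2 / D) ≤ 1 := by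
  rw [Real.exp_le_one_iff, neg_div]
  have : 0 ≤ X^2 / D := by positivity
  linarith

private lemma eqi_h_meas (a b M t : ℝ) :
    Measurable (fun s : ℝ => (Real.sqrt (t-s))⁻¹ * ((Real.sqrt (1+s))⁻¹ * (Real.sqrt s)⁻¹) *
      Real.exp (-(a*t - (a-b)*s)^2 / (2*M*t))) := by
  fun_prop

private lemma eqi_h_nonneg (a b M t : ℝ) (s : ℝ) :
    0 ≤ (Real.sqrt (t-s))⁻¹ * ((Real.sqrt (1+s))⁻¹ * (Real.sqrt s)⁻¹) *
      Real.exp (-(a*t - (a-b)*s)^2 / (2*M*t)) := by positivity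

private lemma eqi_exp_neg_le_inv {x : ℝ} (hx : 0 < x) : Real.exp (-x) ≤ x⁻¹ := by
  rw [Real.exp_neg]
  exact inv_anti₀ hx (by linarith [Real.add_one_le_exp x])

private lemma eqi_zone_bound {h D : ℝ → ℝ} {S : Set ℝ} (hSm : MeasurableSet S)
    (hmeas : Measurable h) (hnn : ∀ s, 0 ≤ h s)
    (hD : IntegrableOn D S) (hle : ∀ s ∈ S, h s ≤ D s) :
    IntegrableOn h S ∧ (∫ s in S, h s) ≤ ∫ s in S, D s := by
  constructor
  · apply Integrable.mono' hD (hmeas.aestronglyMeasurable.restrict)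
    refine (ae_restrict_iff' hSm).2 (ae_of_all _ fun s hs => ?_)
    rw [Real.norm_eq_abs, abs_of_nonneg (hnn s)]
    exact hle s hs
  · exact integral_mono_of_nonneg (ae_of_all _ hnn) hD
      ((ae_restrict_iff' hSm).2 (ae_of_all _ hle))

private lemma eqi_small {a b M t : ℝ} (hM : 0 < M) (ht : 0 < t) :
    IntegrableOn (fun s : ℝ => (Real.sqrt (t-s))⁻¹ * ((Real.sqrt (1+s))⁻¹ * (Real.sqrt s)⁻¹) *
        Real.exp (-(a*t - (a-b)*s)^2 / (2*M*t))) (Ioo 0 t) ∧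
      (∫ s in Ioo (0:ℝ) t, (Real.sqrt (t-s))⁻¹ * ((Real.sqrt (1+s))⁻¹ * (Real.sqrt s)⁻¹) *
        Real.exp (-(a*t - (a-b)*s)^2 / (2*M*t))) ≤ 4 := by
  set h : ℝ → ℝ := fun s => (Real.sqrt (t-s))⁻¹ * ((Real.sqrt (1+s))⁻¹ * (Real.sqrt s)⁻¹) *
        Real.exp (-(a*t - (a-b)*s)^2 / (2*M*t)) with hh
  have hmeas : Measurable h := eqi_h_meas a b M t
  have hnn : ∀ s, 0 ≤ h s := eqi_h_nonneg a b M t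
  have ht2 : 0 < t/2 := by linarith
  have hsq : Real.sqrt (t/2) ≠ 0 := ne_of_gt (Real.sqrt_pos.2 ht2)
  -- zone A : Ioc 0 (t/2)
  have hDA : IntegrableOn (fun s : ℝ => (Real.sqrt (t/2))⁻¹ * (1 * (Real.sqrt s)⁻¹) * 1)
      (Ioc 0 (t/2)) := by
    have h0 := (eqi_integrableOn_sqrt_inv ht2).const_mul (Real.sqrt (t/2))⁻¹
    apply IntegrableOn.congr_fun h0 ?_ measurableSet_Ioc
    intro s _; ring
  have hA := eqi_zone_bound measurableSet_Ioc hmeas hnn hDA (fun s hs => by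
    simp only [hh]
    have h1 : (Real.sqrt (t-s))⁻¹ ≤ (Real.sqrt (t/2))⁻¹ :=
      eqi_inv_sqrt_le ht2 (by rcases hs with ⟨h1, h2⟩; linarith)
    have h2 : (Real.sqrt (1+s))⁻¹ ≤ 1 := eqi_inv_sqrt_le_one (le_of_lt hs.1)
    have h3 : Real.exp (-(a*t - (a-b)*s)^2 / (2*M*t)) ≤ 1 :=
      eqi_exp_term_le_one (by positivity)
    gcongr <;> positivity)
  have hvalA : (∫ s in Ioc (0:ℝ) (t/2), (Real.sqrt (t/2))⁻¹ * (1 * (Real.sqrt s)⁻¹) * 1) = 2 := by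
    have : (fun s : ℝ => (Real.sqrt (t/2))⁻¹ * (1 * (Real.sqrt s)⁻¹) * 1) =
        fun s : ℝ => (Real.sqrt (t/2))⁻¹ * (Real.sqrt s)⁻¹ := by funext s; ring
    rw [this, integral_const_mul, eqi_integral_sqrt_inv ht2.le]
    field_simp
  -- zone B : Ioo (t/2) t
  have hDBIoc : IntegrableOn (fun s : ℝ => (Real.sqrt (t-s))⁻¹ * (1 * (Real.sqrt (t/2))⁻¹) * 1)
      (Ioc (t/2) t) := by
    have h0 := (eqi_integrableOn_sqrt_inv_refl (show t/2 < t by linarith)).mul_const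
      ((1 * (Real.sqrt (t/2))⁻¹) * 1)
    apply IntegrableOn.congr_fun h0 ?_ measurableSet_Ioc
    intro s _; ring
  have hDB : IntegrableOn (fun s : ℝ => (Real.sqrt (t-s))⁻¹ * (1 * (Real.sqrt (t/2))⁻¹) * 1)
      (Ioo (t/2) t) := hDBIoc.mono_set Ioo_subset_Ioc_self
  have hB := eqi_zone_bound measurableSet_Ioo hmeas hnn hDB (fun s hs => by
    simp only [hh]
    have h2 : (Real.sqrt (1+s))⁻¹ ≤ 1 := eqi_inv_sqrt_le_one (by rcases hs with ⟨h1,h2⟩; linarith)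
    have h3 : (Real.sqrt s)⁻¹ ≤ (Real.sqrt (t/2))⁻¹ :=
      eqi_inv_sqrt_le ht2 (le_of_lt hs.1)
    have h4 : Real.exp (-(a*t - (a-b)*s)^2 / (2*M*t)) ≤ 1 :=
      eqi_exp_term_le_one (by positivity)
    gcongr <;> positivity)
  have hvalB : (∫ s in Ioo (t/2) t, (Real.sqrt (t-s))⁻¹ * (1 * (Real.sqrt (t/2))⁻¹) * 1) ≤ 2 := by
    have hmono : (∫ s in Ioo (t/2) t, (Real.sqrt (t-s))⁻¹ * (1 * (Real.sqrt (t/2))⁻¹) * 1) ≤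
        ∫ s in Ioc (t/2) t, (Real.sqrt (t-s))⁻¹ * (1 * (Real.sqrt (t/2))⁻¹) * 1 := by
      apply setIntegral_mono_set hDBIoc (ae_of_all _ fun s => by positivity)
      exact HasSubset.Subset.eventuallyLE Ioo_subset_Ioc_self
    have hval : (∫ s in Ioc (t/2) t, (Real.sqrt (t-s))⁻¹ * (1 * (Real.sqrt (t/2))⁻¹) * 1) = 2 := by
      have : (fun s : ℝ => (Real.sqrt (t-s))⁻¹ * (1 * (Real.sqrt (t/2))⁻¹) * 1) =
          fun s : ℝ => (Real.sqrt (t-s))⁻¹ * (Real.sqrt (t/2))⁻¹ := by funext s; ring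
      rw [this, integral_mul_const, eqi_integral_sqrt_inv_refl (by linarith)]
      rw [show t - t/2 = t/2 by ring]
      field_simp
    linarith
  have hsplit : Ioo (0:ℝ) t = Ioc 0 (t/2) ∪ Ioo (t/2) t := by
    ext x
    simp only [mem_Ioo, mem_union, mem_Ioc]
    constructor
    · rintro ⟨h1, h2⟩
      rcases le_or_gt x (t/2) with h | h
      · exact Or.inl ⟨h1, h⟩
      · exact Or.inr ⟨h, h2⟩
    · rintro (⟨h1, h2⟩ | ⟨h1, h2⟩) <;> constructor <;> linarith
  have hdisj : Disjoint (Ioc (0:ℝ) (t/2)) (Ioo (t/2) t) := by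
    rw [Set.disjoint_left]
    rintro x ⟨_, h1⟩ ⟨h2, _⟩
    linarith
  have hint : IntegrableOn h (Ioo 0 t) := by
    rw [hsplit]; exact hA.1.union hB.1
  refine ⟨hint, ?_⟩
  rw [hsplit, setIntegral_union hdisj measurableSet_Ioo hA.1 hB.1]
  have := hA.2
  have := hB.2
  linarith

private lemma eqi_alg2 {u v w aa KK tt : ℝ} (hu : u ≠ 0) (hv : v ≠ 0) (haa : aa ≠ 0)
    (hKK : KK ≠ 0) (htt : tt ≠ 0) :
    (v * u)⁻¹ * (aa*tt/(2*KK))⁻¹ * (w * u / KK) = (v⁻¹ * 2 * w / aa) * tt⁻¹ := by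
  field_simp

set_option maxHeartbeats 1000000 in
private lemma eqi_large {a b M t : ℝ} (ha : 0 < a) (hb : b < 0) (hM : 0 < M) (ht1 : 1 ≤ t) :
    (∫ s in Ioo (0:ℝ) t, (Real.sqrt (t-s))⁻¹ * ((Real.sqrt (1+s))⁻¹ * (Real.sqrt s)⁻¹) *
        Real.exp (-(a*t - (a-b)*s)^2 / (2*M*t))) ≤
      (16*M/a^2 + (Real.sqrt (-b/(2*(a-b))))⁻¹ * 2 * Real.sqrt (2*Real.pi*M)/a + 32*M/b^2)
        * t⁻¹ := by
  have ht : 0 < t := by linarith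
  have hK : 0 < a - b := by linarith
  set h : ℝ → ℝ := fun s => (Real.sqrt (t-s))⁻¹ * ((Real.sqrt (1+s))⁻¹ * (Real.sqrt s)⁻¹) *
        Real.exp (-(a*t - (a-b)*s)^2 / (2*M*t)) with hh
  have hmeas : Measurable h := eqi_h_meas a b M t
  have hnn : ∀ s, 0 ≤ h s := eqi_h_nonneg a b M t
  set c₁ : ℝ := a*t/(2*(a-b)) with hc₁def
  set c₂ : ℝ := (2*a-b)*t/(2*(a-b)) with hc₂def
  have hc₁ : 0 < c₁ := by positivity
  have ht2 : 0 < t/2 := by linarith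
  have hc₁t2 : c₁ ≤ t/2 := by
    rw [hc₁def, div_le_div_iff₀ (by positivity) (by positivity)]
    nlinarith
  have hc₁c₂ : c₁ < c₂ := by
    rw [hc₁def, hc₂def, div_lt_div_iff₀ (by positivity) (by positivity)]
    nlinarith [mul_pos ht (mul_pos hK hK)]
  have hc₂t : c₂ < t := by
    rw [hc₂def, div_lt_iff₀ (by positivity)]
    nlinarith
  have hc₂half : t/2 ≤ c₂ := by
    rw [hc₂def, div_le_div_iff₀ (by norm_num) (by positivity)]
    nlinarith
  have htc₂ : t - c₂ = (-b)/(2*(a-b)) * t := by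
    rw [hc₂def]; field_simp; ring
  have htc₂pos : 0 < t - c₂ := by linarith
  have hKc₁ : (a-b)*c₁ = a*t/2 := by rw [hc₁def]; field_simp
  have hKc₂ : (a-b)*c₂ = (2*a-b)*t/2 := by rw [hc₂def]; field_simp
  -- Zone 1
  have hD1 : IntegrableOn (fun s : ℝ =>
      (Real.sqrt (t/2))⁻¹ * (1 * (Real.sqrt s)⁻¹) * Real.exp (-(a^2*t/(8*M)))) (Ioc 0 c₁) := by
    have h0 := (eqi_integrableOn_sqrt_inv hc₁).const_mul
      ((Real.sqrt (t/2))⁻¹ * Real.exp (-(a^2*t/(8*M))))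
    apply IntegrableOn.congr_fun h0 ?_ measurableSet_Ioc
    intro s _; ring
  have hZ1 := eqi_zone_bound measurableSet_Ioc hmeas hnn hD1 (fun s hs => by
    simp only [hh]
    have h1 : (Real.sqrt (t-s))⁻¹ ≤ (Real.sqrt (t/2))⁻¹ :=
      eqi_inv_sqrt_le ht2 (by rcases hs with ⟨u1, u2⟩; linarith)
    have h2 : (Real.sqrt (1+s))⁻¹ ≤ 1 := eqi_inv_sqrt_le_one hs.1.le
    have h5 : a*t/2 ≤ a*t - (a-b)*s := by
      have := mul_le_mul_of_nonneg_left hs.2 hK.le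
      rw [hKc₁] at this
      linarith
    have h6 : (a*t/2)*(a*t/2) ≤ (a*t - (a-b)*s)*(a*t - (a-b)*s) :=
      mul_self_le_mul_self (by positivity) h5
    have h3 : Real.exp (-(a*t - (a-b)*s)^2 / (2*M*t)) ≤ Real.exp (-(a^2*t/(8*M))) := by
      rw [Real.exp_le_exp, neg_div, neg_le_neg_iff, div_le_div_iff₀ (by positivity) (by positivity)]
      nlinarith
    gcongr <;> positivity)
  have hval1 : (∫ s in Ioc (0:ℝ) c₁,
      (Real.sqrt (t/2))⁻¹ * (1 * (Real.sqrt s)⁻¹) * Real.exp (-(a^2*t/(8*M)))) ≤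
      (16*M/a^2) * t⁻¹ := by
    have he : (fun s : ℝ => (Real.sqrt (t/2))⁻¹ * (1 * (Real.sqrt s)⁻¹) *
        Real.exp (-(a^2*t/(8*M)))) =
        fun s : ℝ => ((Real.sqrt (t/2))⁻¹ * Real.exp (-(a^2*t/(8*M)))) * (Real.sqrt s)⁻¹ := by
      funext s; ring
    rw [he, integral_const_mul, eqi_integral_sqrt_inv hc₁.le]
    have hsq : (0:ℝ) < Real.sqrt (t/2) := Real.sqrt_pos.2 ht2
    have hstep : (Real.sqrt (t/2))⁻¹ * Real.exp (-(a^2*t/(8*M))) * (2 * Real.sqrt c₁) ≤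
        (Real.sqrt (t/2))⁻¹ * Real.exp (-(a^2*t/(8*M))) * (2 * Real.sqrt (t/2)) := by
      gcongr
    have hcancel : (Real.sqrt (t/2))⁻¹ * Real.exp (-(a^2*t/(8*M))) * (2 * Real.sqrt (t/2)) =
        2 * Real.exp (-(a^2*t/(8*M))) := by
      field_simp
    have hE : Real.exp (-(a^2*t/(8*M))) ≤ (a^2*t/(8*M))⁻¹ := eqi_exp_neg_le_inv (by positivity)
    have hfin : 2 * (a^2*t/(8*M))⁻¹ = (16*M/a^2) * t⁻¹ := by
      field_simp
      ring
    calc (Real.sqrt (t/2))⁻¹ * Real.exp (-(a^2*t/(8*M))) * (2 * Real.sqrt c₁)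
        ≤ 2 * Real.exp (-(a^2*t/(8*M))) := by rw [← hcancel]; exact hstep
      _ ≤ 2 * (a^2*t/(8*M))⁻¹ := by linarith
      _ = (16*M/a^2) * t⁻¹ := hfin
  -- Zone 2
  have hgfun : (fun s : ℝ => Real.exp (-(a*t - (a-b)*s)^2 / (2*M*t))) =
      fun s : ℝ => Real.exp (-((a-b)*s - a*t)^2 / (2*M*t)) := by
    funext s; congr 2; ring
  have hgint : Integrable (fun s : ℝ => Real.exp (-(a*t - (a-b)*s)^2 / (2*M*t))) := by
    rw [hgfun]; exact eqi_gauss_affine_integrable (a*t) hK (by positivity)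
  have hgval : (∫ s : ℝ, Real.exp (-(a*t - (a-b)*s)^2 / (2*M*t))) =
      Real.sqrt (Real.pi * (2*M*t)) / (a-b) := by
    rw [hgfun]; exact eqi_gauss_affine_integral (a*t) hK (by positivity)
  have hD2 : IntegrableOn (fun s : ℝ => (Real.sqrt (t-c₂))⁻¹ *
      ((Real.sqrt c₁)⁻¹ * (Real.sqrt c₁)⁻¹) * Real.exp (-(a*t - (a-b)*s)^2 / (2*M*t)))
      (Ioc c₁ c₂) :=
    ((hgint.const_mul ((Real.sqrt (t-c₂))⁻¹ * ((Real.sqrt c₁)⁻¹ * (Real.sqrt c₁)⁻¹))).integrableOn)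
  have hZ2 := eqi_zone_bound measurableSet_Ioc hmeas hnn hD2 (fun s hs => by
    simp only [hh]
    have h1 : (Real.sqrt (t-s))⁻¹ ≤ (Real.sqrt (t-c₂))⁻¹ :=
      eqi_inv_sqrt_le htc₂pos (by rcases hs with ⟨u1, u2⟩; linarith)
    have h2 : (Real.sqrt (1+s))⁻¹ ≤ (Real.sqrt c₁)⁻¹ :=
      eqi_inv_sqrt_le hc₁ (by rcases hs with ⟨u1, u2⟩; linarith)
    have h3 : (Real.sqrt s)⁻¹ ≤ (Real.sqrt c₁)⁻¹ :=
      eqi_inv_sqrt_le hc₁ hs.1.le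
    gcongr <;> positivity)
  have hval2 : (∫ s in Ioc c₁ c₂, (Real.sqrt (t-c₂))⁻¹ *
      ((Real.sqrt c₁)⁻¹ * (Real.sqrt c₁)⁻¹) * Real.exp (-(a*t - (a-b)*s)^2 / (2*M*t))) ≤
      ((Real.sqrt (-b/(2*(a-b))))⁻¹ * 2 * Real.sqrt (2*Real.pi*M)/a) * t⁻¹ := by
    rw [integral_const_mul]
    have hmono : (∫ s in Ioc c₁ c₂, Real.exp (-(a*t - (a-b)*s)^2 / (2*M*t))) ≤
        ∫ s : ℝ, Real.exp (-(a*t - (a-b)*s)^2 / (2*M*t)) :=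
      setIntegral_le_integral hgint (ae_of_all _ fun s => by positivity)
    have hCnn : (0:ℝ) ≤ (Real.sqrt (t-c₂))⁻¹ * ((Real.sqrt c₁)⁻¹ * (Real.sqrt c₁)⁻¹) := by
      positivity
    calc (Real.sqrt (t-c₂))⁻¹ * ((Real.sqrt c₁)⁻¹ * (Real.sqrt c₁)⁻¹) *
          ∫ s in Ioc c₁ c₂, Real.exp (-(a*t - (a-b)*s)^2 / (2*M*t))
        ≤ (Real.sqrt (t-c₂))⁻¹ * ((Real.sqrt c₁)⁻¹ * (Real.sqrt c₁)⁻¹) *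
          (Real.sqrt (Real.pi * (2*M*t)) / (a-b)) := by
          rw [← hgval]
          exact mul_le_mul_of_nonneg_left hmono hCnn
      _ = ((Real.sqrt (-b/(2*(a-b))))⁻¹ * 2 * Real.sqrt (2*Real.pi*M)/a) * t⁻¹ := by
          have e1 : Real.sqrt (t-c₂) = Real.sqrt (-b/(2*(a-b))) * Real.sqrt t := by
            rw [htc₂, Real.sqrt_mul (div_nonneg (by linarith) (by linarith))]
          have e2 : Real.sqrt (Real.pi * (2*M*t)) = Real.sqrt (2*Real.pi*M) * Real.sqrt t := by
            rw [← Real.sqrt_mul (by positivity)]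
            congr 1; ring
          have e3 : (Real.sqrt c₁)⁻¹ * (Real.sqrt c₁)⁻¹ = c₁⁻¹ := by
            rw [← mul_inv, Real.mul_self_sqrt hc₁.le]
          have hsb : (0:ℝ) < Real.sqrt (-b/(2*(a-b))) :=
            Real.sqrt_pos.2 (div_pos (by linarith) (by linarith))
          have hst : (0:ℝ) < Real.sqrt t := Real.sqrt_pos.2 ht
          rw [e1, e2, e3, hc₁def]
          exact eqi_alg2 hst.ne' hsb.ne' ha.ne' hK.ne' ht.ne'
  -- Zone 3
  have hc₂pos : 0 < c₂ := lt_trans hc₁ hc₁c₂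
  have hD3Ioc : IntegrableOn (fun s : ℝ => (Real.sqrt (t-s))⁻¹ *
      ((Real.sqrt c₂)⁻¹ * (Real.sqrt c₂)⁻¹) * Real.exp (-(b^2*t/(8*M)))) (Ioc c₂ t) := by
    have h0 := (eqi_integrableOn_sqrt_inv_refl hc₂t).mul_const
      (((Real.sqrt c₂)⁻¹ * (Real.sqrt c₂)⁻¹) * Real.exp (-(b^2*t/(8*M))))
    apply IntegrableOn.congr_fun h0 ?_ measurableSet_Ioc
    intro s _; ring
  have hD3 : IntegrableOn (fun s : ℝ => (Real.sqrt (t-s))⁻¹ *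
      ((Real.sqrt c₂)⁻¹ * (Real.sqrt c₂)⁻¹) * Real.exp (-(b^2*t/(8*M)))) (Ioo c₂ t) :=
    hD3Ioc.mono_set Ioo_subset_Ioc_self
  have hZ3 := eqi_zone_bound measurableSet_Ioo hmeas hnn hD3 (fun s hs => by
    simp only [hh]
    have h2 : (Real.sqrt (1+s))⁻¹ ≤ (Real.sqrt c₂)⁻¹ :=
      eqi_inv_sqrt_le hc₂pos (by rcases hs with ⟨u1, u2⟩; linarith)
    have h3 : (Real.sqrt s)⁻¹ ≤ (Real.sqrt c₂)⁻¹ :=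
      eqi_inv_sqrt_le hc₂pos hs.1.le
    have h5 : -b*t/2 ≤ (a-b)*s - a*t := by
      have := mul_le_mul_of_nonneg_left hs.1.le hK.le
      rw [hKc₂] at this
      linarith
    have h6 : (-b*t/2)*(-b*t/2) ≤ ((a-b)*s - a*t)*((a-b)*s - a*t) :=
      mul_self_le_mul_self (by nlinarith) h5
    have h4 : Real.exp (-(a*t - (a-b)*s)^2 / (2*M*t)) ≤ Real.exp (-(b^2*t/(8*M))) := by
      rw [Real.exp_le_exp, neg_div, neg_le_neg_iff, div_le_div_iff₀ (by positivity) (by positivity)]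
      nlinarith
    gcongr <;> positivity)
  have hval3 : (∫ s in Ioo c₂ t, (Real.sqrt (t-s))⁻¹ *
      ((Real.sqrt c₂)⁻¹ * (Real.sqrt c₂)⁻¹) * Real.exp (-(b^2*t/(8*M)))) ≤
      (32*M/b^2) * t⁻¹ := by
    have hmono : (∫ s in Ioo c₂ t, (Real.sqrt (t-s))⁻¹ *
        ((Real.sqrt c₂)⁻¹ * (Real.sqrt c₂)⁻¹) * Real.exp (-(b^2*t/(8*M)))) ≤
        ∫ s in Ioc c₂ t, (Real.sqrt (t-s))⁻¹ *
        ((Real.sqrt c₂)⁻¹ * (Real.sqrt c₂)⁻¹) * Real.exp (-(b^2*t/(8*M))) := by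
      apply setIntegral_mono_set hD3Ioc (ae_of_all _ fun s => by positivity)
      exact HasSubset.Subset.eventuallyLE Ioo_subset_Ioc_self
    have he : (fun s : ℝ => (Real.sqrt (t-s))⁻¹ *
        ((Real.sqrt c₂)⁻¹ * (Real.sqrt c₂)⁻¹) * Real.exp (-(b^2*t/(8*M)))) =
        fun s : ℝ => (Real.sqrt (t-s))⁻¹ *
        (((Real.sqrt c₂)⁻¹ * (Real.sqrt c₂)⁻¹) * Real.exp (-(b^2*t/(8*M)))) := by
      funext s; ring
    have hval : (∫ s in Ioc c₂ t, (Real.sqrt (t-s))⁻¹ *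
        ((Real.sqrt c₂)⁻¹ * (Real.sqrt c₂)⁻¹) * Real.exp (-(b^2*t/(8*M)))) =
        2 * Real.sqrt (t-c₂) * (((Real.sqrt c₂)⁻¹ * (Real.sqrt c₂)⁻¹) *
          Real.exp (-(b^2*t/(8*M)))) := by
      rw [he, integral_mul_const, eqi_integral_sqrt_inv_refl hc₂t.le]
    have e3 : (Real.sqrt c₂)⁻¹ * (Real.sqrt c₂)⁻¹ = c₂⁻¹ := by
      rw [← mul_inv, Real.mul_self_sqrt hc₂pos.le]
    have hb1 : Real.sqrt (t-c₂) ≤ Real.sqrt t := Real.sqrt_le_sqrt (by linarith)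
    have hb2 : Real.sqrt t ≤ t := by
      have h1 : (1:ℝ) ≤ Real.sqrt t := by
        rw [show (1:ℝ) = Real.sqrt 1 by simp]
        exact Real.sqrt_le_sqrt ht1
      nlinarith [Real.sq_sqrt ht.le]
    have hb3 : c₂⁻¹ ≤ (t/2)⁻¹ := inv_anti₀ ht2 hc₂half
    have hb4 : Real.exp (-(b^2*t/(8*M))) ≤ (b^2*t/(8*M))⁻¹ := eqi_exp_neg_le_inv
      (div_pos (mul_pos (by nlinarith : (0:ℝ) < b^2) ht) (by linarith))
    have hfinal : 2 * t * ((t/2)⁻¹ * (b^2*t/(8*M))⁻¹) = (32*M/b^2) * t⁻¹ := by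
      field_simp [ht.ne', hb.ne]
      ring
    calc (∫ s in Ioo c₂ t, (Real.sqrt (t-s))⁻¹ *
        ((Real.sqrt c₂)⁻¹ * (Real.sqrt c₂)⁻¹) * Real.exp (-(b^2*t/(8*M))))
        ≤ 2 * Real.sqrt (t-c₂) * (((Real.sqrt c₂)⁻¹ * (Real.sqrt c₂)⁻¹) *
            Real.exp (-(b^2*t/(8*M)))) := by rw [← hval]; exact hmono
      _ = 2 * Real.sqrt (t-c₂) * (c₂⁻¹ * Real.exp (-(b^2*t/(8*M)))) := by rw [e3]
      _ ≤ 2 * t * ((t/2)⁻¹ * (b^2*t/(8*M))⁻¹) := by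
          apply mul_le_mul
          · linarith [hb1, hb2]
          · apply mul_le_mul hb3 hb4 (Real.exp_nonneg _) ?_
            · positivity
          · positivity
          · positivity
      _ = (32*M/b^2) * t⁻¹ := hfinal
  -- assemble
  have hsplit : Ioo (0:ℝ) t = (Ioc 0 c₁ ∪ Ioc c₁ c₂) ∪ Ioo c₂ t := by
    ext x
    simp only [mem_Ioo, mem_union, mem_Ioc]
    constructor
    · rintro ⟨u1, u2⟩
      rcases le_or_gt x c₁ with v | v
      · exact Or.inl (Or.inl ⟨u1, v⟩)
      · rcases le_or_gt x c₂ with w | w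
        · exact Or.inl (Or.inr ⟨v, w⟩)
        · exact Or.inr ⟨w, u2⟩
    · rintro ((⟨u1, u2⟩ | ⟨u1, u2⟩) | ⟨u1, u2⟩) <;> constructor <;> linarith
  have hd12 : Disjoint (Ioc (0:ℝ) c₁) (Ioc c₁ c₂) := by
    rw [Set.disjoint_left]; rintro x ⟨_, u1⟩ ⟨u2, _⟩; linarith
  have hd3 : Disjoint (Ioc (0:ℝ) c₁ ∪ Ioc c₁ c₂) (Ioo c₂ t) := by
    rw [Set.disjoint_left]
    rintro x (⟨_, u1⟩ | ⟨_, u1⟩) ⟨u2, _⟩ <;> linarith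
  rw [hsplit, setIntegral_union hd3 measurableSet_Ioo (hZ1.1.union hZ2.1) hZ3.1,
    setIntegral_union hd12 measurableSet_Ioc hZ1.1 hZ2.1]
  have q1 := le_trans hZ1.2 hval1
  have q2 := le_trans hZ2.2 hval2
  have q3 := le_trans hZ3.2 hval3
  linarith

theorem excited_quadratic_interaction (a b M : ℝ)
    (ha : 0 < a) (hb : b < 0) (hM : 0 < M) :
    ∃ C > 0, ∀ t : ℝ, 0 < t →
      (∫ s in Set.Ioo (0:ℝ) t, ∫ y in Set.Iic (0:ℝ),
          (t - s)⁻¹ * Real.exp (-(y + a*(t-s))^2 / (M*(t-s))) *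
            ((1 + s) ^ (-(1/2:ℝ)) * s ^ (-(1/2:ℝ))) *
            Real.exp (-(y - b*s)^2 / (M*s))) ≤
        C * (1 + t)⁻¹ := by
  set C₁ : ℝ := 16*M/a^2 + (Real.sqrt (-b/(2*(a-b))))⁻¹ * 2 * Real.sqrt (2*Real.pi*M)/a
    + 32*M/b^2 with hC₁def
  have hC₁nn : 0 ≤ C₁ := by positivity
  set C₀ : ℝ := 8 + 2*C₁ with hC₀def
  have hC₀pos : 0 < C₀ := by linarith
  have hsq : 0 < Real.sqrt (2*Real.pi*M) :=
    Real.sqrt_pos.2 (by positivity)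
  refine ⟨Real.sqrt (2*Real.pi*M) * C₀, mul_pos hsq hC₀pos, fun t ht => ?_⟩
  -- step 1 : bound double integral by sqrt(2 pi M) * J t
  have hint := (eqi_small (a := a) (b := b) hM ht).1
  have step1 : (∫ s in Set.Ioo (0:ℝ) t, ∫ y in Set.Iic (0:ℝ),
      (t - s)⁻¹ * Real.exp (-(y + a*(t-s))^2 / (M*(t-s))) *
        ((1 + s) ^ (-(1/2:ℝ)) * s ^ (-(1/2:ℝ))) *
        Real.exp (-(y - b*s)^2 / (M*s))) ≤
      ∫ s in Set.Ioo (0:ℝ) t, Real.sqrt (2*Real.pi*M) *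
        ((Real.sqrt (t-s))⁻¹ * ((Real.sqrt (1+s))⁻¹ * (Real.sqrt s)⁻¹) *
          Real.exp (-(a*t - (a-b)*s)^2 / (2*M*t))) := by
    apply integral_mono_of_nonneg
    · refine (ae_restrict_iff' measurableSet_Ioo).2 (ae_of_all _ fun s hs => ?_)
      apply integral_nonneg
      intro y
      have h1 : (0:ℝ) ≤ (t-s)⁻¹ := inv_nonneg.2 (by rcases hs with ⟨u1, u2⟩; linarith)
      have h2 : (0:ℝ) ≤ (1+s) ^ (-(1/2:ℝ)) := Real.rpow_nonneg (by rcases hs with ⟨u1, u2⟩; linarith) _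
      have h3 : (0:ℝ) ≤ s ^ (-(1/2:ℝ)) := Real.rpow_nonneg hs.1.le _
      exact mul_nonneg (mul_nonneg (mul_nonneg h1 (Real.exp_nonneg _)) (mul_nonneg h2 h3))
        (Real.exp_nonneg _)
    · exact hint.const_mul _
    · refine (ae_restrict_iff' measurableSet_Ioo).2 (ae_of_all _ fun s hs => ?_)
      exact eqi_inner_bound ha hb hM hs.1 hs.2
  rw [integral_const_mul] at step1
  -- step 2 : bound J t
  have hJ : (∫ s in Set.Ioo (0:ℝ) t,
      (Real.sqrt (t-s))⁻¹ * ((Real.sqrt (1+s))⁻¹ * (Real.sqrt s)⁻¹) *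
        Real.exp (-(a*t - (a-b)*s)^2 / (2*M*t))) ≤ C₀ * (1+t)⁻¹ := by
    rcases le_or_gt t 1 with hcase | hcase
    · have h4 := (eqi_small (a := a) (b := b) hM ht).2
      have hinv : (2:ℝ)⁻¹ ≤ (1+t)⁻¹ := inv_anti₀ (by linarith) (by linarith)
      have : (4:ℝ) ≤ C₀ * (1+t)⁻¹ := by
        calc (4:ℝ) = 8 * (2:ℝ)⁻¹ := by norm_num
          _ ≤ C₀ * (1+t)⁻¹ := by
              apply mul_le_mul (by linarith) hinv (by norm_num) hC₀pos.le
      linarith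
    · have h4 := eqi_large ha hb hM hcase.le
      rw [← hC₁def] at h4
      have h5 : C₁ * t⁻¹ ≤ C₀ * (1+t)⁻¹ := by
        have h6 : (2*t)⁻¹ ≤ (1+t)⁻¹ := inv_anti₀ (by linarith) (by linarith)
        calc C₁ * t⁻¹ = (2*C₁) * (2*t)⁻¹ := by rw [mul_inv]; ring
          _ ≤ (2*C₁) * (1+t)⁻¹ := mul_le_mul_of_nonneg_left h6 (by linarith)
          _ ≤ C₀ * (1+t)⁻¹ := mul_le_mul_of_nonneg_right (by linarith)
              (inv_nonneg.2 (by linarith))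
      linarith
  calc (∫ s in Set.Ioo (0:ℝ) t, ∫ y in Set.Iic (0:ℝ),
      (t - s)⁻¹ * Real.exp (-(y + a*(t-s))^2 / (M*(t-s))) *
        ((1 + s) ^ (-(1/2:ℝ)) * s ^ (-(1/2:ℝ))) *
        Real.exp (-(y - b*s)^2 / (M*s))) ≤
      Real.sqrt (2*Real.pi*M) * ∫ s in Set.Ioo (0:ℝ) t,
        (Real.sqrt (t-s))⁻¹ * ((Real.sqrt (1+s))⁻¹ * (Real.sqrt s)⁻¹) *
          Real.exp (-(a*t - (a-b)*s)^2 / (2*M*t)) := step1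
    _ ≤ Real.sqrt (2*Real.pi*M) * (C₀ * (1+t)⁻¹) := mul_le_mul_of_nonneg_left hJ hsq.le
    _ = Real.sqrt (2*Real.pi*M) * C₀ * (1+t)⁻¹ := by ring
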